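/- Let b ∈ L¹[−1,1] be such that b₀(x) := b(x)√((1−x)/(1+x)) satisfies b₀(x) = b₀(−x) for almost every x ∈ (−1,1). Define d on T by d(e^{iθ}) = b₀(cos(θ/2)) for 0 ≤ θ < 2π. Then for every n ≥ 1: det H_n[b] = det T_n(d), where T_n(d) = (d_{j−k})_{j,k=0}^{n−1}. -/

import Mathlib

open Filter MeasureTheory

noncomputable section

/-- The `k`-th Fourier coefficient of a function on the unit circle, given as a
`2π`-periodic function of the angle: `d_k = (1/(2π)) ∫_0^{2π} f(θ) e^{-ikθ} dθ`. -/
def fc (f : ℝ → ℂ) (k : ℤ) : ℂ :=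
  ((1 / (2 * Real.pi) : ℝ) : ℂ) *
    ∫ θ in (0:ℝ)..(2 * Real.pi), f θ * Complex.exp (-(Complex.I * k * θ))

/-- The Hankel-matrix entry `b_{m}` with `m = e + 1`:
`bmom b e = (1/π) ∫_{-1}^1 b(x)(2x)^e dx`. -/
def bmom (b : ℝ → ℂ) (e : ℕ) : ℂ :=
  ((1 / Real.pi : ℝ) : ℂ) * ∫ x in (-1:ℝ)..1, b x * (2 * (x : ℂ)) ^ e


open Polynomial Polynomial.Chebyshev Finset

noncomputable section

def beta : ℕ → ℕ → ℕ
  | 0, 0 => 1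
  | 0, _+1 => 0
  | j+1, 0 => beta j 0 + beta j 1
  | j+1, m+1 => beta j m + beta j (m+2)

lemma beta_gt : ∀ {j m : ℕ}, j < m → beta j m = 0 := by
  intro j
  induction j with
  | zero => intro m h; match m, h with | m+1, _ => rfl
  | succ j ih =>
    intro m h
    match m, h with
    | m+1, h =>
      show beta j m + beta j (m+2) = 0
      rw [ih (by omega), ih (by omega)]

lemma beta_diag : ∀ j : ℕ, beta j j = 1 := by
  intro j
  induction j with
  | zero => rfl
  | succ j ih =>
    show beta j j + beta j (j+2) = 1
    rw [ih, beta_gt (by omega)]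

def Fp (a b : ℤ) : Polynomial ℝ := T ℝ (a - b) + T ℝ (a + b + 1)

lemma two_X_mul_T (n : ℤ) : (2 * X : ℝ[X]) * T ℝ n = T ℝ (n+1) + T ℝ (n-1) := by
  have h := Polynomial.Chebyshev.T_add_two ℝ (n-1)
  simp only [show n-1+2 = n+1 from by ring, show n-1+1 = n from by ring] at h
  linear_combination -h

lemma Fp_symm (a b : ℤ) : Fp a b = Fp b a := by
  unfold Fp
  rw [show a - b = -(b - a) by ring, T_neg, show a + b + 1 = b + a + 1 by ring]

lemma Fp_mul (a b : ℤ) : (2 * X : ℝ[X]) * Fp a b = Fp (a+1) b + Fp (a-1) b := by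
  unfold Fp
  rw [mul_add, two_X_mul_T, two_X_mul_T,
    show a - b + 1 = a + 1 - b by ring, show a - b - 1 = a - 1 - b by ring,
    show a + b + 1 + 1 = a + 1 + b + 1 by ring, show a + b + 1 - 1 = a - 1 + b + 1 by ring]
  ring

lemma Fp_neg_one (b : ℤ) : Fp (-1) b = Fp 0 b := by
  unfold Fp
  rw [show (-1 : ℤ) - b = -(b + 1) by ring, T_neg, show (-1 : ℤ) + b + 1 = b by ring,
    show (0 : ℤ) - b = -b by ring, T_neg, zero_add]
  ring

end
noncomputable section
lemma P1 (j : ℕ) (bb : ℤ) :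
    ((2 * X : ℝ[X])) ^ j * Fp 0 bb = ∑ a ∈ range (j+1), (beta j a : ℝ[X]) * Fp a bb := by
  induction j with
  | zero => simp [beta]
  | succ j ih =>
    have step : ((2*X:ℝ[X]))^(j+1) * Fp 0 bb
        = (∑ a ∈ range (j+1), (beta j a : ℝ[X]) * Fp ((a:ℤ)+1) bb)
          + (∑ a ∈ range (j+1), (beta j a : ℝ[X]) * Fp ((a:ℤ)-1) bb) := by
      rw [pow_succ, mul_comm (_^j) (2*X), mul_assoc, ih, Finset.mul_sum,
        ← Finset.sum_add_distrib]
      refine Finset.sum_congr rfl fun a _ => ?_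
      rw [← mul_assoc, mul_comm ((2:ℝ[X])*X) _, mul_assoc, Fp_mul]; ring
    set q : ℕ → ℝ[X] := fun a => (if a = 0 then 0 else (beta j (a-1) : ℝ[X])) * Fp a bb with hq
    have hS1 : (∑ a ∈ range (j+1), (beta j a : ℝ[X]) * Fp ((a:ℤ)+1) bb)
        = ∑ a ∈ range (j+2), q a := by
      rw [Finset.sum_range_succ' q (j+1)]
      have hq0 : q 0 = 0 := by simp [hq]
      rw [hq0, add_zero]
      refine Finset.sum_congr rfl fun a _ => ?_
      simp only [hq, if_neg (Nat.succ_ne_zero a), Nat.add_sub_cancel]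
      norm_cast
    have hS2 : (∑ a ∈ range (j+1), (beta j a : ℝ[X]) * Fp ((a:ℤ)-1) bb)
        = (∑ a ∈ range (j+2), (beta j (a+1) : ℝ[X]) * Fp a bb)
          + (beta j 0 : ℝ[X]) * Fp 0 bb := by
      rw [Finset.sum_range_succ' (fun a => (beta j a : ℝ[X]) * Fp ((a:ℤ)-1) bb) j]
      congr 1
      · rw [← Finset.sum_subset (Finset.range_subset_range.mpr (by omega : j ≤ j+2))
          (fun a _ ha => by rw [beta_gt (by simp at ha; omega), Nat.cast_zero, zero_mul])]
        refine Finset.sum_congr rfl fun a _ => ?_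
        have h1 : ((a+1:ℕ):ℤ) - 1 = (a:ℤ) := by push_cast; ring
        rw [h1]
      · rw [show ((0:ℕ):ℤ) - 1 = -1 by norm_num, Fp_neg_one]
    rw [step, hS1, hS2, ← add_assoc, ← Finset.sum_add_distrib]
    have key : ∀ a ∈ range (j+2), (beta (j+1) a : ℝ[X]) * Fp a bb
        = (q a + (beta j (a+1) : ℝ[X]) * Fp a bb)
          + (if a = 0 then (beta j 0 : ℝ[X]) * Fp 0 bb else 0) := by
      intro a _
      match a with
      | 0 =>
        show ((beta j 0 + beta j 1 : ℕ) : ℝ[X]) * Fp 0 bb = _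
        simp [hq]; push_cast; ring
      | m+1 =>
        show ((beta j m + beta j (m+2) : ℕ) : ℝ[X]) * Fp (m+1 : ℕ) bb = _
        simp [hq]; push_cast; ring
    rw [Finset.sum_congr rfl key, Finset.sum_add_distrib, Finset.sum_add_distrib,
      Finset.sum_ite_eq' (range (j+2)) 0 (fun _ => (beta j 0 : ℝ[X]) * Fp 0 bb)]
    simp [Finset.sum_add_distrib]

lemma P2 (n j k : ℕ) (hj : j < n) (hk : k < n) :
    ((1 + X) * (2 * X : ℝ[X]) ^ (j + k))
      = ∑ a ∈ range n, ∑ c ∈ range n, ((beta j a * beta k c : ℕ) : ℝ[X]) * Fp a c := by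
  have ext1 : ∀ (m : ℕ) (bb : ℤ), m < n →
      ((2 * X : ℝ[X])) ^ m * Fp 0 bb = ∑ a ∈ range n, (beta m a : ℝ[X]) * Fp a bb := by
    intro m bb hm
    rw [P1 m bb]
    exact Finset.sum_subset (Finset.range_subset_range.mpr (by omega))
      (fun a _ ha => by rw [beta_gt (by simp at ha; omega), Nat.cast_zero, zero_mul])
  have base : ((1 : ℝ[X]) + X) = Fp 0 0 := by
    unfold Fp
    rw [show (0:ℤ) - 0 = 0 by ring, show (0:ℤ) + 0 + 1 = 1 by ring,
      Polynomial.Chebyshev.T_zero, Polynomial.Chebyshev.T_one]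
  rw [base, pow_add, mul_comm (Fp 0 0), mul_assoc, ext1 k 0 hk, Finset.mul_sum]
  have swap : ∀ c ∈ range n, (2*X:ℝ[X])^j * ((beta k c : ℝ[X]) * Fp c 0)
      = ∑ a ∈ range n, ((beta j a * beta k c : ℕ) : ℝ[X]) * Fp a c := by
    intro c _
    rw [Fp_symm c 0, mul_comm ((beta k c : ℝ[X])) _, ← mul_assoc, ext1 j c hj, Finset.sum_mul]
    refine Finset.sum_congr rfl fun a _ => ?_
    push_cast; ring
  rw [Finset.sum_congr rfl swap, Finset.sum_comm]
end

open MeasureTheory Real Set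

noncomputable section

def wfun (x : ℝ) : ℝ := (Real.sqrt (1 - x^2))⁻¹

lemma wfun_even (x : ℝ) : wfun (-x) = wfun x := by simp [wfun]

lemma sqrt_id {x : ℝ} (hx : x ∈ Set.Ioo (-1:ℝ) 1) :
    Real.sqrt ((1-x)/(1+x)) * ((1+x) * wfun x) = 1 := by
  obtain ⟨hx1, hx2⟩ := hx
  have h1 : (0:ℝ) < 1 - x := by linarith
  have h2 : (0:ℝ) < 1 + x := by linarith
  have e1 : Real.sqrt ((1-x)/(1+x)) = Real.sqrt (1-x) / Real.sqrt (1+x) :=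
    Real.sqrt_div h1.le _
  have e2 : (1 : ℝ) - x^2 = (1-x) * (1+x) := by ring
  have e3 : Real.sqrt (1 - x^2) = Real.sqrt (1-x) * Real.sqrt (1+x) := by
    rw [e2, Real.sqrt_mul h1.le]
  have p1 : 0 < Real.sqrt (1-x) := Real.sqrt_pos.mpr h1
  have p2 : 0 < Real.sqrt (1+x) := Real.sqrt_pos.mpr h2
  have q2 : Real.sqrt (1+x) * Real.sqrt (1+x) = 1 + x := Real.mul_self_sqrt h2.le
  rw [wfun, e1, e3]
  field_simp
  nlinarith [q2, p1, p2]

lemma sqrt_id' {x : ℝ} (hx : x ∈ Set.Ioo (-1:ℝ) 1) (hx0 : 0 ≤ x) :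
    Real.sqrt ((1-x)/(1+x)) * wfun x ≤ 1 := by
  have h2 : (0:ℝ) < 1 + x := by linarith [hx.1]
  have key := sqrt_id hx
  have : Real.sqrt ((1-x)/(1+x)) * wfun x = (1+x)⁻¹ := by
    field_simp at key ⊢
    nlinarith [key]
  rw [this]
  rw [inv_le_one_iff₀]
  right; linarith

end
noncomputable section
open Polynomial Polynomial.Chebyshev

lemma wfun_nonneg (x : ℝ) : 0 ≤ wfun x := by
  unfold wfun; positivity

lemma neg_image_Ioo (a c : ℝ) : (fun x : ℝ => -x) '' Set.Ioo a c = Set.Ioo (-c) (-a) := by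
  ext x
  constructor
  · rintro ⟨y, hy, rfl⟩
    simp only [Set.mem_Ioo] at hy ⊢
    constructor <;> linarith [hy.1, hy.2]
  · intro hx
    simp only [Set.mem_Ioo] at hx
    exact ⟨-x, Set.mem_Ioo.mpr ⟨by linarith, by linarith⟩, by ring⟩

lemma reflect_integral (f : ℝ → ℂ) :
    ∫ x in Set.Ioo (-1:ℝ) 1, f x = ∫ x in Set.Ioo (-1:ℝ) 1, f (-x) := by
  have h := integral_image_eq_integral_abs_deriv_smul (measurableSet_Ioo (a := (-1:ℝ)) (b := 1))
    (fun x _ => (hasDerivAt_neg x).hasDerivWithinAt) (neg_injective.injOn) f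
  rw [neg_image_Ioo] at h
  simpa using h

lemma reflect_integrable (f : ℝ → ℂ) (h : IntegrableOn (fun x => f (-x)) (Set.Ioo (0:ℝ) 1)) :
    IntegrableOn f (Set.Ioo (-1:ℝ) 0) := by
  have h2 := integrableOn_image_iff_integrableOn_abs_deriv_smul
    (measurableSet_Ioo (a := (0:ℝ)) (b := 1))
    (fun x _ => (hasDerivAt_neg x).hasDerivWithinAt) (neg_injective.injOn) f
  rw [neg_image_Ioo] at h2
  simp only [neg_zero] at h2
  apply h2.mpr
  simpa using h

lemma meas_w : Measurable fun x : ℝ => ((wfun x : ℝ) : ℂ) := by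
  apply Complex.measurable_ofReal.comp
  exact ((measurable_const.sub (measurable_id.pow_const 2)).sqrt).inv

section core

variable {b b0 : ℝ → ℂ}
  (hbint : IntegrableOn b (Set.Icc (-1 : ℝ) 1))
  (hb0 : ∀ x : ℝ, b0 x = b x * ((Real.sqrt ((1 - x) / (1 + x)) : ℝ) : ℂ))
  (heven : ∀ᵐ x ∂(volume.restrict (Set.Ioo (-1:ℝ) 1)), b0 x = b0 (-x))

include hbint hb0 in
lemma msb0 : AEStronglyMeasurable b0 (volume.restrict (Set.Ioo (-1:ℝ) 1)) := by
  have hb : AEStronglyMeasurable b (volume.restrict (Set.Ioo (-1:ℝ) 1)) :=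
    hbint.aestronglyMeasurable.mono_measure
      (Measure.restrict_mono Set.Ioo_subset_Icc_self le_rfl)
  have h2 : b0 = fun x => b x * ((Real.sqrt ((1 - x) / (1 + x)) : ℝ) : ℂ) := funext hb0
  rw [h2]
  apply hb.mul
  have : Measurable fun x : ℝ => ((Real.sqrt ((1 - x) / (1 + x)) : ℝ) : ℂ) := by
    apply Complex.measurable_ofReal.comp
    exact ((measurable_const.sub measurable_id).div (measurable_const.add measurable_id)).sqrt
  exact this.aestronglyMeasurable

include hbint hb0 heven in
lemma int_core : IntegrableOn (fun x => b0 x * ((wfun x : ℝ) : ℂ)) (Set.Ioo (-1:ℝ) 1) := by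
  have hmeas : AEStronglyMeasurable (fun x => b0 x * ((wfun x : ℝ) : ℂ))
      (volume.restrict (Set.Ioo (-1:ℝ) 1)) :=
    (msb0 hbint hb0).mul meas_w.aestronglyMeasurable
  have hsub1 : Set.Ico (0:ℝ) 1 ⊆ Set.Ioo (-1:ℝ) 1 := by
    intro x hx; simp only [Set.mem_Ico, Set.mem_Ioo] at *; constructor <;> linarith [hx.1, hx.2]
  have hsub2 : Set.Ico (0:ℝ) 1 ⊆ Set.Icc (-1:ℝ) 1 := by
    intro x hx; simp only [Set.mem_Ico, Set.mem_Icc] at *; constructor <;> linarith [hx.1, hx.2]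
  have key : ∀ x ∈ Set.Ico (0:ℝ) 1, ‖b0 x * ((wfun x : ℝ) : ℂ)‖ ≤ ‖b x‖ := by
    intro x hx
    have hx' : x ∈ Set.Ioo (-1:ℝ) 1 := hsub1 hx
    have hnorm : ‖b0 x * ((wfun x : ℝ) : ℂ)‖
        = ‖b x‖ * (Real.sqrt ((1-x)/(1+x)) * wfun x) := by
      rw [hb0 x, norm_mul, norm_mul, Complex.norm_real, Complex.norm_real,
        Real.norm_eq_abs, Real.norm_eq_abs, abs_of_nonneg (Real.sqrt_nonneg _),
        abs_of_nonneg (wfun_nonneg x)]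
      ring
    rw [hnorm]
    calc ‖b x‖ * (Real.sqrt ((1-x)/(1+x)) * wfun x) ≤ ‖b x‖ * 1 :=
          mul_le_mul_of_nonneg_left (sqrt_id' hx' hx.1) (norm_nonneg _)
      _ = ‖b x‖ := mul_one _
  have i1 : IntegrableOn (fun x => b0 x * ((wfun x : ℝ) : ℂ)) (Set.Ico (0:ℝ) 1) := by
    apply Integrable.mono' (g := fun x => ‖b x‖)
      (IntegrableOn.mono_set hbint.norm hsub2)
      (hmeas.mono_measure (Measure.restrict_mono hsub1 le_rfl))
    rw [ae_restrict_iff' measurableSet_Ico]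
    exact Filter.Eventually.of_forall key
  have i2 : IntegrableOn (fun x => b0 x * ((wfun x : ℝ) : ℂ)) (Set.Ioo (-1:ℝ) 0) := by
    apply reflect_integrable
    have hsub3 : Set.Ioo (0:ℝ) 1 ⊆ Set.Ioo (-1:ℝ) 1 := by
      intro x hx; simp only [Set.mem_Ioo] at *; constructor <;> linarith [hx.1, hx.2]
    have hev : ∀ᵐ x ∂(volume.restrict (Set.Ioo (0:ℝ) 1)), b0 x = b0 (-x) :=
      ae_restrict_of_ae_restrict_of_subset hsub3 heven
    have hsub4 : Set.Ioo (0:ℝ) 1 ⊆ Set.Ico (0:ℝ) 1 := by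
      intro x hx; simp only [Set.mem_Ioo, Set.mem_Ico] at *
      constructor <;> linarith [hx.1, hx.2]
    apply Integrable.congr (IntegrableOn.mono_set i1 hsub4)
    filter_upwards [hev] with x hx
    rw [wfun_even, ← hx]
  have hcover : Set.Ioo (-1:ℝ) 1 ⊆ Set.Ioo (-1:ℝ) 0 ∪ Set.Ico (0:ℝ) 1 := by
    intro x hx
    simp only [Set.mem_Ioo, Set.mem_Ico, Set.mem_union] at *
    rcases lt_or_ge x 0 with h | h
    · exact Or.inl ⟨hx.1, h⟩
    · exact Or.inr ⟨h, hx.2⟩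
  exact IntegrableOn.mono_set (i2.union i1) hcover

include hbint hb0 heven in
lemma int_poly (p : ℝ → ℂ) (hp : Continuous p) :
    IntegrableOn (fun x => b0 x * p x * ((wfun x : ℝ) : ℂ)) (Set.Ioo (-1:ℝ) 1) := by
  obtain ⟨C, hC⟩ := (isCompact_Icc (a := (-1:ℝ)) (b := 1)).exists_bound_of_continuousOn
    hp.continuousOn
  have hmeas : AEStronglyMeasurable (fun x => b0 x * p x * ((wfun x : ℝ) : ℂ))
      (volume.restrict (Set.Ioo (-1:ℝ) 1)) :=
    ((msb0 hbint hb0).mul hp.aestronglyMeasurable).mul meas_w.aestronglyMeasurable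
  apply Integrable.mono' (((int_core hbint hb0 heven).norm).const_mul C) hmeas
  rw [ae_restrict_iff' measurableSet_Ioo]
  apply Filter.Eventually.of_forall
  intro x hx
  have hsplit : ‖b0 x * p x * ((wfun x : ℝ) : ℂ)‖ = ‖p x‖ * ‖b0 x * ((wfun x : ℝ) : ℂ)‖ := by
    rw [norm_mul, norm_mul, norm_mul]; ring
  rw [hsplit]
  apply mul_le_mul_of_nonneg_right _ (norm_nonneg _)
  exact hC x ⟨le_of_lt hx.1, le_of_lt hx.2⟩

include heven in
lemma odd_vanish (p : ℝ → ℂ) (hodd : ∀ x ∈ Set.Ioo (-1:ℝ) 1, p (-x) = - p x) :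
    ∫ x in Set.Ioo (-1:ℝ) 1, b0 x * p x * ((wfun x : ℝ) : ℂ) = 0 := by
  set I := ∫ x in Set.Ioo (-1:ℝ) 1, b0 x * p x * ((wfun x : ℝ) : ℂ) with hI
  have h1 : I = ∫ x in Set.Ioo (-1:ℝ) 1, b0 (-x) * p (-x) * ((wfun (-x) : ℝ) : ℂ) :=
    reflect_integral _
  have h2 : ∫ x in Set.Ioo (-1:ℝ) 1, b0 (-x) * p (-x) * ((wfun (-x) : ℝ) : ℂ)
      = ∫ x in Set.Ioo (-1:ℝ) 1, -(b0 x * p x * ((wfun x : ℝ) : ℂ)) := by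
    apply setIntegral_congr_ae measurableSet_Ioo
    filter_upwards [(ae_restrict_iff' measurableSet_Ioo).mp heven] with x hx hmem
    rw [wfun_even, hodd x hmem, ← hx hmem]
    ring
  have h3 : I = -I := by
    calc I = _ := h1
    _ = _ := h2
    _ = -I := integral_neg _
  linear_combination h3 / 2

end core
end
noncomputable section
open Polynomial Polynomial.Chebyshev Real

lemma arccos_lt_pi' {x : ℝ} (h : -1 < x) (h2 : x ≤ 1) : Real.arccos x < π := by
  refine lt_of_le_of_ne (Real.arccos_le_pi x) (fun hc => ?_)
  have := Real.cos_arccos h.le h2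
  rw [hc, Real.cos_pi] at this
  linarith

lemma cos_image : Real.cos '' Set.Ioo (0:ℝ) π = Set.Ioo (-1:ℝ) 1 := by
  ext y
  constructor
  · rintro ⟨φ, hφ, rfl⟩
    simp only [Set.mem_Ioo] at hφ ⊢
    constructor
    · have := Real.strictAntiOn_cos (Set.mem_Icc.mpr ⟨hφ.1.le, hφ.2.le⟩)
        (Set.mem_Icc.mpr ⟨Real.pi_pos.le, le_rfl⟩) hφ.2
      rw [Real.cos_pi] at this; exact this
    · have := Real.strictAntiOn_cos (Set.mem_Icc.mpr ⟨le_rfl, Real.pi_pos.le⟩)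
        (Set.mem_Icc.mpr ⟨hφ.1.le, hφ.2.le⟩) hφ.1
      rw [Real.cos_zero] at this; exact this
  · intro hy
    simp only [Set.mem_Ioo] at hy
    exact ⟨Real.arccos y, Set.mem_Ioo.mpr ⟨Real.arccos_pos.mpr hy.2, arccos_lt_pi' hy.1 hy.2.le⟩,
      Real.cos_arccos hy.1.le hy.2.le⟩

lemma cos_odd_pi (n : ℤ) (hn : Odd n) : Real.cos (n * π) = -1 := by
  obtain ⟨l, rfl⟩ := hn
  have : ((2*l+1 : ℤ) : ℝ) * π = l * (2 * π) + π := by push_cast; ring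
  rw [this, Real.cos_add, Real.cos_int_mul_two_pi]
  simp [Real.cos_pi, Real.sin_pi]

lemma T_eval_neg_odd (n : ℤ) (hn : Odd n) {x : ℝ} (hx : x ∈ Set.Ioo (-1:ℝ) 1) :
    (T ℝ n).eval (-x) = -(T ℝ n).eval x := by
  have h1 : -1 ≤ x := hx.1.le
  have h2 : x ≤ 1 := hx.2.le
  have hcx : Real.cos (Real.arccos x) = x := Real.cos_arccos h1 h2
  have hneg : -x = Real.cos (π - Real.arccos x) := by rw [Real.cos_pi_sub, hcx]
  have e1 : (T ℝ n).eval (-x) = Real.cos (n * (π - Real.arccos x)) := by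
    rw [hneg, T_real_cos]
  have e2 : (T ℝ n).eval x = Real.cos (n * Real.arccos x) := by
    conv_lhs => rw [← hcx]
    rw [T_real_cos]
  rw [e1, e2, mul_sub, Real.cos_sub, cos_odd_pi n hn, Real.sin_int_mul_pi]
  ring

lemma sin_two_arccos_odd (m : ℤ) {x : ℝ} (hx : x ∈ Set.Ioo (-1:ℝ) 1) :
    Real.sin (2*(m:ℝ)*Real.arccos (-x)) = - Real.sin (2*(m:ℝ)*Real.arccos x) := by
  rw [Real.arccos_neg, mul_sub, show 2*(m:ℝ)*π = ((2*m:ℤ):ℝ) * π by push_cast; ring,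
    Real.sin_sub, Real.sin_int_mul_pi, show ((2*m:ℤ):ℝ) * π = ((m:ℤ):ℝ) * (2*π) by push_cast; ring,
    Real.cos_int_mul_two_pi]
  simp

end
noncomputable section
open Polynomial Polynomial.Chebyshev Real


section entries

variable {b b0 d : ℝ → ℂ}
  (hbint : IntegrableOn b (Set.Icc (-1 : ℝ) 1))
  (hb0 : ∀ x : ℝ, b0 x = b x * ((Real.sqrt ((1 - x) / (1 + x)) : ℝ) : ℂ))
  (heven : ∀ᵐ x ∂(volume.restrict (Set.Ioo (-1:ℝ) 1)), b0 x = b0 (-x))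
  (hd : ∀ θ : ℝ, 0 ≤ θ → θ < 2 * Real.pi → d θ = b0 (Real.cos (θ / 2)))

include hb0 in
lemma hankel_entry (e : ℕ) :
    bmom b e = ((1/Real.pi : ℝ) : ℂ) *
      ∫ x in Set.Ioo (-1:ℝ) 1,
        b0 x * (((((1+X)*(2*X)^e : ℝ[X])).eval x : ℝ) : ℂ) * ((wfun x : ℝ) : ℂ) := by
  unfold bmom
  congr 1
  rw [intervalIntegral.integral_of_le (by norm_num : (-1:ℝ) ≤ 1), integral_Ioc_eq_integral_Ioo]
  apply setIntegral_congr_fun measurableSet_Ioo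
  intro x hx
  have key := sqrt_id hx
  have hbx : b x = b0 x * ((((1+x) * wfun x : ℝ)) : ℂ) := by
    rw [hb0 x, mul_assoc, ← Complex.ofReal_mul, key, Complex.ofReal_one, mul_one]
  have heval : ((((1+X)*(2*X)^e : ℝ[X])).eval x : ℝ) = (1+x)*(2*x)^e := by
    simp [Polynomial.eval_mul, Polynomial.eval_pow]
  simp only [heval, hbx]
  push_cast
  ring

include hbint hb0 heven hd in
lemma toeplitz_entry (m : ℤ) :
    fc d m = ((1/Real.pi : ℝ) : ℂ) *
      ∫ x in Set.Ioo (-1:ℝ) 1,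
        b0 x * (((T ℝ (2*m)).eval x : ℝ) : ℂ) * ((wfun x : ℝ) : ℂ) := by
  have h2pi : (0:ℝ) < 2*Real.pi := by positivity
  have ha : ∫ θ in (0:ℝ)..(2*Real.pi), d θ * Complex.exp (-(Complex.I*m*θ))
      = ∫ θ in (0:ℝ)..(2*Real.pi), b0 (Real.cos (θ/2)) * Complex.exp (-(Complex.I*m*θ)) := by
    apply intervalIntegral.integral_congr_ae
    have hne : ∀ᵐ θ : ℝ, θ ≠ 2*Real.pi := by
      rw [ae_iff]
      simp only [ne_eq, not_not, Set.setOf_eq_eq_singleton]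
      exact measure_singleton _
    filter_upwards [hne] with θ hθ hmem
    rw [Set.uIoc_of_le h2pi.le] at hmem
    rw [hd θ hmem.1.le (lt_of_le_of_ne hmem.2 hθ)]
  set f : ℝ → ℂ := fun θ => b0 (Real.cos (θ/2)) * Complex.exp (-(Complex.I*m*θ)) with hf
  have hb : ((2:ℝ)) • ∫ φ in (0:ℝ)..Real.pi, f (2*φ)
      = ∫ θ in (2*(0:ℝ))..(2*Real.pi), f θ :=
    intervalIntegral.smul_integral_comp_mul_left f 2
  rw [mul_zero] at hb
  set gg : ℝ → ℂ := fun x => b0 x *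
      ((((T ℝ (2*m)).eval x : ℝ) : ℂ)
        - Complex.I * ((Real.sin (2*(m:ℝ)*Real.arccos x) : ℝ) : ℂ)) * ((wfun x : ℝ) : ℂ)
    with hgg
  have hsub := integral_image_eq_integral_abs_deriv_smul measurableSet_Ioo
    (fun φ _ => (Real.hasDerivAt_cos φ).hasDerivWithinAt)
    (Real.injOn_cos.mono Set.Ioo_subset_Icc_self) gg
  rw [cos_image] at hsub
  have hround : ∫ φ in Set.Ioo (0:ℝ) Real.pi, f (2*φ)
      = ∫ φ in Set.Ioo (0:ℝ) Real.pi, |(-Real.sin φ)| • gg (Real.cos φ) := by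
    apply setIntegral_congr_fun measurableSet_Ioo
    intro φ hφ
    have hs : 0 < Real.sin φ := Real.sin_pos_of_pos_of_lt_pi hφ.1 hφ.2
    have hac : Real.arccos (Real.cos φ) = φ := Real.arccos_cos hφ.1.le hφ.2.le
    have hw : wfun (Real.cos φ) = (Real.sin φ)⁻¹ := by
      rw [wfun]
      congr 1
      rw [show 1 - Real.cos φ^2 = Real.sin φ^2 by nlinarith [Real.sin_sq_add_cos_sq φ]]
      exact Real.sqrt_sq hs.le
    have hT : ((T ℝ (2*m)).eval (Real.cos φ)) = Real.cos (2*(m:ℝ)*φ) := by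
      rw [T_real_cos]
      congr 1
      push_cast
      ring
    have hexp : Complex.exp (-(Complex.I*(m:ℂ)*((2*φ:ℝ):ℂ))) =
        ((Real.cos (2*(m:ℝ)*φ) : ℝ) : ℂ) - Complex.I * ((Real.sin (2*(m:ℝ)*φ) : ℝ) : ℂ) := by
      have harg : -(Complex.I*(m:ℂ)*((2*φ:ℝ):ℂ)) = ((-(2*(m:ℝ)*φ) : ℝ) : ℂ) * Complex.I := by
        push_cast; ring
      rw [harg, Complex.exp_mul_I, ← Complex.ofReal_cos, ← Complex.ofReal_sin,
        Real.cos_neg, Real.sin_neg]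
      push_cast
      ring
    have hcos2 : (2*φ)/2 = φ := by ring
    rw [hf]
    simp only
    rw [hcos2, hgg]
    simp only
    rw [hT, hac, hw, abs_neg, abs_of_pos hs, hexp]
    have hsne : ((Real.sin φ : ℝ) : ℂ) ≠ 0 := by exact_mod_cast hs.ne'
    rw [Complex.real_smul]
    have hsne2 : (Complex.sin (φ:ℂ)) ≠ 0 := by
      rw [← Complex.ofReal_sin]; exact_mod_cast hs.ne'
    field_simp
    rw [mul_assoc _ ((Real.sin φ : ℝ) : ℂ) _, ← Complex.ofReal_mul, mul_one_div_cancel hs.ne',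
      Complex.ofReal_one, mul_one]
  have intA : IntegrableOn
      (fun x => b0 x * (((T ℝ (2*m)).eval x : ℝ) : ℂ) * ((wfun x : ℝ) : ℂ))
      (Set.Ioo (-1:ℝ) 1) := by
    apply int_poly hbint hb0 heven
    exact Complex.continuous_ofReal.comp (T ℝ (2*m)).continuous
  have intS : IntegrableOn
      (fun x => b0 x * ((Real.sin (2*(m:ℝ)*Real.arccos x) : ℝ) : ℂ) * ((wfun x : ℝ) : ℂ))
      (Set.Ioo (-1:ℝ) 1) := by
    apply int_poly hbint hb0 heven
    exact Complex.continuous_ofReal.comp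
      (Real.continuous_sin.comp (continuous_const.mul Real.continuous_arccos))
  have hggsplit : gg = fun x =>
      (b0 x * (((T ℝ (2*m)).eval x : ℝ) : ℂ) * ((wfun x : ℝ) : ℂ))
      - Complex.I * (b0 x * ((Real.sin (2*(m:ℝ)*Real.arccos x) : ℝ) : ℂ) * ((wfun x : ℝ) : ℂ)) := by
    funext x
    rw [hgg]
    ring
  have hzero : ∫ x in Set.Ioo (-1:ℝ) 1,
      b0 x * ((Real.sin (2*(m:ℝ)*Real.arccos x) : ℝ) : ℂ) * ((wfun x : ℝ) : ℂ) = 0 := by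
    apply odd_vanish heven
    intro x hx
    rw [← Complex.ofReal_neg, Complex.ofReal_inj]
    exact sin_two_arccos_odd m hx
  have hggint : ∫ x in Set.Ioo (-1:ℝ) 1, gg x
      = ∫ x in Set.Ioo (-1:ℝ) 1,
          b0 x * (((T ℝ (2*m)).eval x : ℝ) : ℂ) * ((wfun x : ℝ) : ℂ) := by
    rw [hggsplit, integral_sub intA (intS.const_mul Complex.I), MeasureTheory.integral_const_mul, hzero,
      mul_zero, sub_zero]
  calc fc d m
      = ((1/(2*Real.pi) : ℝ) : ℂ) * ∫ θ in (0:ℝ)..(2*Real.pi), f θ := by rw [fc, ha]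
    _ = ((1/(2*Real.pi) : ℝ) : ℂ) * ((2:ℝ) • ∫ φ in (0:ℝ)..Real.pi, f (2*φ)) := by rw [hb]
    _ = ((1/Real.pi : ℝ) : ℂ) * ∫ φ in (0:ℝ)..Real.pi, f (2*φ) := by
        rw [Complex.real_smul, ← mul_assoc, ← Complex.ofReal_mul]
        congr 2
        field_simp
    _ = ((1/Real.pi : ℝ) : ℂ) * ∫ φ in Set.Ioo (0:ℝ) Real.pi, f (2*φ) := by
        rw [intervalIntegral.integral_of_le Real.pi_pos.le, integral_Ioc_eq_integral_Ioo]
    _ = ((1/Real.pi : ℝ) : ℂ) * ∫ x in Set.Ioo (-1:ℝ) 1, gg x := by rw [hround, ← hsub]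
    _ = _ := by rw [hggint]

end entries
end

noncomputable section
open Polynomial Polynomial.Chebyshev Finset Real MeasureTheory Matrix

def gz : ℕ → ℤ := fun a => if a % 2 = 0 then ((a/2 : ℕ) : ℤ) else -(((a/2 : ℕ) : ℤ) + 1)

section assembly

variable {b b0 d : ℝ → ℂ}
  (hbint : IntegrableOn b (Set.Icc (-1 : ℝ) 1))
  (hb0 : ∀ x : ℝ, b0 x = b x * ((Real.sqrt ((1 - x) / (1 + x)) : ℝ) : ℂ))
  (heven : ∀ᵐ x ∂(volume.restrict (Set.Ioo (-1:ℝ) 1)), b0 x = b0 (-x))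

include hbint hb0 heven in
lemma int_polyeval (p : ℝ[X]) :
    IntegrableOn (fun x => b0 x * ((p.eval x : ℝ) : ℂ) * ((wfun x : ℝ) : ℂ))
      (Set.Ioo (-1:ℝ) 1) :=
  int_poly hbint hb0 heven _ (Complex.continuous_ofReal.comp p.continuous)

include hbint hb0 heven in
lemma Phi_sum (N : ℕ) (q : ℕ → ℕ → ℝ[X]) (coef : ℕ → ℕ → ℕ) :
    ((1/Real.pi : ℝ) : ℂ) * ∫ x in Set.Ioo (-1:ℝ) 1,
        b0 x * ((((∑ a ∈ range N, ∑ c ∈ range N,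
            ((coef a c : ℕ) : ℝ[X]) * q a c)).eval x : ℝ) : ℂ) * ((wfun x : ℝ) : ℂ)
      = ∑ a ∈ range N, ∑ c ∈ range N, ((coef a c : ℕ) : ℂ) *
          (((1/Real.pi : ℝ) : ℂ) * ∫ x in Set.Ioo (-1:ℝ) 1,
            b0 x * (((q a c).eval x : ℝ) : ℂ) * ((wfun x : ℝ) : ℂ)) := by
  have hpt : (fun x => b0 x * ((((∑ a ∈ range N, ∑ c ∈ range N,
        ((coef a c : ℕ) : ℝ[X]) * q a c)).eval x : ℝ) : ℂ) * ((wfun x : ℝ) : ℂ))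
      = fun x => ∑ a ∈ range N, ∑ c ∈ range N, ((coef a c : ℕ) : ℂ) *
          (b0 x * (((q a c).eval x : ℝ) : ℂ) * ((wfun x : ℝ) : ℂ)) := by
    funext x
    rw [Polynomial.eval_finset_sum]
    have h1 : ∀ a ∈ range N, Polynomial.eval x (∑ c ∈ range N, ((coef a c : ℕ) : ℝ[X]) * q a c)
        = ∑ c ∈ range N, (coef a c : ℝ) * Polynomial.eval x (q a c) := by
      intro a _
      rw [Polynomial.eval_finset_sum]
      exact Finset.sum_congr rfl fun c _ => by
        rw [Polynomial.eval_mul, Polynomial.eval_natCast]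
    rw [Finset.sum_congr rfl h1]
    push_cast
    rw [Finset.mul_sum, Finset.sum_mul]
    refine Finset.sum_congr rfl fun a _ => ?_
    rw [Finset.mul_sum, Finset.sum_mul]
    refine Finset.sum_congr rfl fun c _ => ?_
    ring
  rw [hpt]
  have hint1 : ∀ a ∈ range N, Integrable (fun x => ∑ c ∈ range N, ((coef a c : ℕ) : ℂ) *
      (b0 x * (((q a c).eval x : ℝ) : ℂ) * ((wfun x : ℝ) : ℂ)))
      (volume.restrict (Set.Ioo (-1:ℝ) 1)) := by
    intro a _
    apply integrable_finset_sum
    intro c _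
    exact (int_polyeval hbint hb0 heven (q a c)).const_mul _
  rw [integral_finset_sum _ hint1, Finset.mul_sum]
  refine Finset.sum_congr rfl fun a _ => ?_
  have hint2 : ∀ c ∈ range N, Integrable (fun x => ((coef a c : ℕ) : ℂ) *
      (b0 x * (((q a c).eval x : ℝ) : ℂ) * ((wfun x : ℝ) : ℂ)))
      (volume.restrict (Set.Ioo (-1:ℝ) 1)) := by
    intro c _
    exact (int_polyeval hbint hb0 heven (q a c)).const_mul _
  rw [integral_finset_sum _ hint2, Finset.mul_sum]
  refine Finset.sum_congr rfl fun c _ => ?_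
  rw [MeasureTheory.integral_const_mul]
  ring

end assembly

/-- Let `b ∈ L¹[−1,1]` be such that `b₀(x) = b(x)√((1−x)/(1+x))` is even (a.e.) on
`(−1,1)`, and define `d` on the circle by `d(e^{iθ}) = b₀(cos(θ/2))` for `0 ≤ θ < 2π`.
Then for every `n ≥ 1`, `det H_n[b] = det T_n(d)`. -/
theorem stmt10 (b : ℝ → ℂ) (hbint : IntegrableOn b (Set.Icc (-1 : ℝ) 1))
    (b0 : ℝ → ℂ)
    (hb0 : ∀ x : ℝ, b0 x = b x * ((Real.sqrt ((1 - x) / (1 + x)) : ℝ) : ℂ))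
    (heven : ∀ᵐ x ∂(volume.restrict (Set.Ioo (-1:ℝ) 1)), b0 x = b0 (-x))
    (d : ℝ → ℂ)
    (hd : ∀ θ : ℝ, 0 ≤ θ → θ < 2 * Real.pi → d θ = b0 (Real.cos (θ / 2))) :
    ∀ n : ℕ, 1 ≤ n →
      (Matrix.of fun j k : Fin n => bmom b ((j : ℕ) + k)).det
        = (Matrix.of fun j k : Fin n => fc d ((j : ℤ) - k)).det := by
  intro n hn
  classical
  set Φ : ℝ[X] → ℂ := fun q => ((1/Real.pi : ℝ) : ℂ) *
    ∫ x in Set.Ioo (-1:ℝ) 1, b0 x * ((q.eval x : ℝ) : ℂ) * ((wfun x : ℝ) : ℂ) with hPhi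
  set cphi : ℤ → ℂ := fun m => Φ (T ℝ (2*m)) with hcphi
  have hfc : ∀ m : ℤ, fc d m = cphi m := fun m =>
    toeplitz_entry hbint hb0 heven hd m
  have hPhiodd : ∀ m : ℤ, Odd m → Φ (T ℝ m) = 0 := by
    intro m hm
    simp only [hPhi]
    rw [odd_vanish heven _ (fun x hx => ?_), mul_zero]
    rw [← Complex.ofReal_neg, Complex.ofReal_inj]
    exact T_eval_neg_odd m hm hx
  have hPhineg : ∀ m : ℤ, Φ (T ℝ (-m)) = Φ (T ℝ m) := fun m => by rw [T_neg]
  have hFpPhi : ∀ a c : ℕ, Φ (Fp a c) = cphi (gz a - gz c) := by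
    intro a c
    have hsplit : Φ (Fp a c) = Φ (T ℝ ((a:ℤ) - c)) + Φ (T ℝ ((a:ℤ)+c+1)) := by
      simp only [hPhi, Fp]
      rw [← mul_add, ← integral_add (int_polyeval hbint hb0 heven _)
        (int_polyeval hbint hb0 heven _)]
      congr 1
      apply setIntegral_congr_fun measurableSet_Ioo
      intro x _
      simp only [Polynomial.eval_add]
      push_cast
      ring
    by_cases hpar : a % 2 = c % 2
    · have hodd : Odd ((a:ℤ)+c+1) := by rw [Int.odd_iff]; omega
      have h2 : (a:ℤ)-c = 2*(gz a - gz c) ∨ (a:ℤ)-c = -(2*(gz a - gz c)) := by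
        simp only [gz]; split_ifs <;> omega
      rw [hsplit, hPhiodd _ hodd, add_zero, hcphi]
      rcases h2 with h | h
      · rw [h]
      · rw [h, hPhineg]
    · have hodd : Odd ((a:ℤ)-c) := by rw [Int.odd_iff]; omega
      have h2 : (a:ℤ)+c+1 = 2*(gz a - gz c) ∨ (a:ℤ)+c+1 = -(2*(gz a - gz c)) := by
        simp only [gz]; split_ifs <;> omega
      rw [hsplit, hPhiodd _ hodd, zero_add, hcphi]
      rcases h2 with h | h
      · rw [h]
      · rw [h, hPhineg]
  have hH : ∀ j k : Fin n, bmom b ((j:ℕ) + k)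
      = ∑ a ∈ range n, ∑ c ∈ range n,
          ((beta j a * beta k c : ℕ) : ℂ) * cphi (gz a - gz c) := by
    intro j k
    rw [hankel_entry hb0 ((j:ℕ)+(k:ℕ)), P2 n j k j.2 k.2,
      Phi_sum hbint hb0 heven n (fun a c : ℕ => Fp a c) (fun a c => beta j a * beta k c)]
    exact Finset.sum_congr rfl fun a _ => Finset.sum_congr rfl fun c _ => by
      rw [← hFpPhi a c, hPhi]
  -- matrices
  set B : Matrix (Fin n) (Fin n) ℂ := Matrix.of fun j a : Fin n => ((beta j a : ℕ) : ℂ) with hB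
  set G : Matrix (Fin n) (Fin n) ℂ :=
    Matrix.of fun a c : Fin n => cphi (gz a - gz c) with hG
  have hfact : (Matrix.of fun j k : Fin n => bmom b ((j : ℕ) + k)) = B * G * Bᵀ := by
    ext j k
    have hentry : (B * G * Bᵀ) j k = ∑ c : Fin n, ∑ a : Fin n,
        ((beta j a * beta k c : ℕ) : ℂ) * cphi (gz a - gz c) := by
      rw [Matrix.mul_apply]
      refine Finset.sum_congr rfl fun c _ => ?_
      rw [Matrix.mul_apply, Finset.sum_mul]
      refine Finset.sum_congr rfl fun a _ => ?_
      rw [Matrix.transpose_apply]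
      simp only [hB, hG, Matrix.of_apply]
      push_cast
      ring
    rw [Matrix.of_apply, hentry, Finset.sum_comm, hH j k]
    rw [Fin.sum_univ_eq_sum_range (fun a => ∑ c : Fin n,
      ((beta j a * beta k (c:ℕ) : ℕ) : ℂ) * cphi (gz a - gz (c:ℕ))) n]
    refine Finset.sum_congr rfl fun a _ => ?_
    rw [Fin.sum_univ_eq_sum_range (fun c => ((beta j a * beta k c : ℕ) : ℂ)
      * cphi (gz a - gz c)) n]
  have hBdet : B.det = 1 := by
    have htri : B.BlockTriangular OrderDual.toDual := by
      intro i j hij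
      simp only [hB, Matrix.of_apply]
      have hlt : (i:ℕ) < (j:ℕ) := OrderDual.toDual_lt_toDual.mp hij
      rw [beta_gt hlt, Nat.cast_zero]
    rw [Matrix.det_of_lowerTriangular B htri]
    apply Finset.prod_eq_one
    intro i _
    simp only [hB, Matrix.of_apply]
    rw [beta_diag, Nat.cast_one]
  -- permutation
  set pn : ℕ → ℕ := fun a => if a % 2 = 0 then n/2 + a/2 else n/2 - (a/2 + 1) with hpn
  have hpn_lt : ∀ a : Fin n, pn a < n := by
    intro a
    have := a.2
    simp only [hpn]
    split_ifs <;> omega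
  have hpn_g : ∀ a c : Fin n, ((pn a : ℕ) : ℤ) - ((pn c : ℕ) : ℤ) = gz a - gz c := by
    intro a c
    have ha := a.2
    have hc := c.2
    simp only [hpn, gz]
    split_ifs <;> omega
  have hinj : Function.Injective (fun a : Fin n => (⟨pn a, hpn_lt a⟩ : Fin n)) := by
    intro a c h
    have h2 : pn a = pn c := congrArg Fin.val h
    have ha := a.2
    have hc := c.2
    apply Fin.ext
    simp only [hpn] at h2
    split_ifs at h2 <;> omega
  set e : Fin n ≃ Fin n :=
    Equiv.ofBijective _ (Finite.injective_iff_bijective.mp hinj) with he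
  have hGsub : G = (Matrix.of fun j k : Fin n => fc d ((j : ℤ) - k)).submatrix e e := by
    ext a c
    rw [Matrix.submatrix_apply]
    simp only [hG, Matrix.of_apply, he, Equiv.ofBijective_apply]
    rw [hfc, hpn_g a c]
  rw [hfact, Matrix.det_mul, Matrix.det_mul, hBdet, Matrix.det_transpose, hBdet,
    one_mul, mul_one, hGsub, Matrix.det_submatrix_equiv_self]

end
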